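/- Let n ≥ 2 and let S_C ⊆ A^0_{2n} be the set consisting of s_{2n−1}, s_{n−1}, and the products s_i·s_{2n−i−2} for 0 ≤ i ≤ n−2. Then every element of S_C is fixed by R^0, and the fixed-point subgroup {g ∈ A^0_{2n} : R^0(g) = g} is exactly the subgroup of A^0_{2n} generated by S_C. -/

import Mathlib

/-- The underlying function of the affine simple reflection `s_i`, exchanging
`i + 2nt` and `i + 1 + 2nt` for all `t ∈ ℤ` and fixing all other integers. -/
def sFun (n : ℕ) (i : ℤ) : ℤ → ℤ := fun x =>
  if (2*(n:ℤ)) ∣ (x - i) then x + 1 else if (2*(n:ℤ)) ∣ (x - i - 1) then x - 1 else x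

theorem two_n_not_dvd_one (n : ℕ) : ¬ ((2*(n:ℤ)) ∣ 1) := by
  intro h
  have h' := Int.isUnit_iff.mp (isUnit_of_dvd_one h)
  omega

theorem sFun_invol (n : ℕ) (i : ℤ) (x : ℤ) : sFun n i (sFun n i x) = x := by
  unfold sFun
  by_cases h1 : (2*(n:ℤ)) ∣ (x - i)
  · have h2 : ¬ (2*(n:ℤ)) ∣ (x + 1 - i) := by
      intro hc
      apply two_n_not_dvd_one n
      have hd := dvd_sub hc h1
      have he : (x + 1 - i) - (x - i) = 1 := by ring
      rwa [he] at hd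
    have h3 : (2*(n:ℤ)) ∣ (x + 1 - i - 1) := by
      have he : x + 1 - i - 1 = x - i := by ring
      rwa [he]
    simp [h1, h2, h3]
  · by_cases h2 : (2*(n:ℤ)) ∣ (x - i - 1)
    · have h3 : (2*(n:ℤ)) ∣ (x - 1 - i) := by
        have he : x - 1 - i = x - i - 1 := by ring
        rwa [he]
      simp [h1, h2, h3]
    · simp [h1, h2]

/-- The affine simple reflection `s_i ∈ A⁰_(2n)`. -/
def sPerm (n : ℕ) (i : ℤ) : Equiv.Perm ℤ :=
  ⟨sFun n i, sFun n i, sFun_invol n i, sFun_invol n i⟩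

namespace A0aux

variable {n : ℕ}

lemma ndvd (hn : 1 ≤ n) {a : ℤ} (h0 : a ≠ 0) (h1 : -(2*(n:ℤ)) < a) (h2 : a < 2*(n:ℤ)) :
    ¬ (2*(n:ℤ)) ∣ a := by
  intro h
  rcases lt_or_gt_of_ne h0 with hlt | hgt
  · have h3 : (2*(n:ℤ)) ∣ (-a) := dvd_neg.2 h
    have := Int.le_of_dvd (by omega) h3
    omega
  · have := Int.le_of_dvd hgt h
    omega

lemma dvd_congr {a b : ℤ} (hab : (2*(n:ℤ)) ∣ a - b) : (2*(n:ℤ)) ∣ a ↔ (2*(n:ℤ)) ∣ b := by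
  constructor
  · intro h; have := dvd_sub h hab; simpa using this
  · intro h; have := dvd_add h hab; simpa [add_sub_cancel] using this

lemma sPerm_add {j x : ℤ} (h : (2*(n:ℤ)) ∣ (x - j)) : sPerm n j x = x + 1 := by
  show sFun n j x = x + 1
  unfold sFun; simp [h]

lemma sPerm_sub {j x : ℤ} (h : (2*(n:ℤ)) ∣ (x - j - 1)) : sPerm n j x = x - 1 := by
  have h1 : ¬ (2*(n:ℤ)) ∣ (x - j) := by
    intro hc
    apply two_n_not_dvd_one n
    have := dvd_sub hc h
    simpa using this
  show sFun n j x = x - 1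
  unfold sFun; simp [h1, h]

lemma sPerm_fix {j x : ℤ} (h1 : ¬ (2*(n:ℤ)) ∣ (x - j)) (h2 : ¬ (2*(n:ℤ)) ∣ (x - j - 1)) :
    sPerm n j x = x := by
  show sFun n j x = x
  unfold sFun; simp [h1, h2]

lemma sPerm_congr {j j' : ℤ} (h : (2*(n:ℤ)) ∣ (j - j')) : sPerm n j = sPerm n j' := by
  ext x
  show sFun n j x = sFun n j' x
  unfold sFun
  have e1 : (2*(n:ℤ)) ∣ (x - j) ↔ (2*(n:ℤ)) ∣ (x - j') := by
    apply dvd_congr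
    have : x - j - (x - j') = -(j - j') := by ring
    rw [this]; exact dvd_neg.2 h
  have e2 : (2*(n:ℤ)) ∣ (x - j - 1) ↔ (2*(n:ℤ)) ∣ (x - j' - 1) := by
    apply dvd_congr
    have : x - j - 1 - (x - j' - 1) = -(j - j') := by ring
    rw [this]; exact dvd_neg.2 h
  simp only [e1, e2]

lemma sPerm_per (j x : ℤ) : sPerm n j (x + 2*(n:ℤ)) = sPerm n j x + 2*(n:ℤ) := by
  have e1 : (2*(n:ℤ)) ∣ (x + 2*(n:ℤ) - j) ↔ (2*(n:ℤ)) ∣ (x - j) := by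
    apply dvd_congr
    have : x + 2*(n:ℤ) - j - (x - j) = 2*(n:ℤ) := by ring
    rw [this]
  have e2 : (2*(n:ℤ)) ∣ (x + 2*(n:ℤ) - j - 1) ↔ (2*(n:ℤ)) ∣ (x - j - 1) := by
    apply dvd_congr
    have : x + 2*(n:ℤ) - j - 1 - (x - j - 1) = 2*(n:ℤ) := by ring
    rw [this]
  show sFun n j (x + 2*(n:ℤ)) = sFun n j x + 2*(n:ℤ)
  unfold sFun
  simp only [e1, e2]
  split_ifs <;> ring

/-- iterated periodicity -/
lemma per_int {g : Equiv.Perm ℤ} (hg : ∀ i : ℤ, g (i + 2*(n:ℤ)) = g i + 2*(n:ℤ)) :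
    ∀ (t : ℤ) (i : ℤ), g (i + 2*(n:ℤ)*t) = g i + 2*(n:ℤ)*t := by
  intro t
  induction t using Int.induction_on with
  | zero => simp
  | succ k ih =>
    intro i
    have e : i + 2*(n:ℤ)*((k:ℤ)+1) = (i + 2*(n:ℤ)*(k:ℤ)) + 2*(n:ℤ) := by ring
    rw [e, hg, ih]; ring
  | pred k ih =>
    intro i
    have h1 := hg (i + 2*(n:ℤ)*(-(k:ℤ)-1))
    have e : i + 2*(n:ℤ)*(-(k:ℤ)-1) + 2*(n:ℤ) = i + 2*(n:ℤ)*(-(k:ℤ)) := by ring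
    rw [e, ih] at h1
    linarith

lemma per_congr {g : Equiv.Perm ℤ} (hg : ∀ i : ℤ, g (i + 2*(n:ℤ)) = g i + 2*(n:ℤ))
    {x y : ℤ} (h : (2*(n:ℤ)) ∣ (x - y)) : g x = g y + (x - y) := by
  obtain ⟨t, ht⟩ := h
  have e : x = y + 2*(n:ℤ)*t := by linarith
  rw [e, per_int hg t y]; ring

lemma per_symm {g : Equiv.Perm ℤ} (hg : ∀ i : ℤ, g (i + 2*(n:ℤ)) = g i + 2*(n:ℤ)) :
    ∀ i : ℤ, g.symm (i + 2*(n:ℤ)) = g.symm i + 2*(n:ℤ) := by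
  intro i
  apply g.injective
  rw [hg, Equiv.apply_symm_apply, Equiv.apply_symm_apply]

/-- the representative of `x` mod `2n` inside `[1, 2n]` -/
def red (n : ℕ) (x : ℤ) : ℤ := 1 + (x - 1) % (2*(n:ℤ))

lemma red_mem (hn : 1 ≤ n) (x : ℤ) : red n x ∈ Finset.Icc (1:ℤ) (2*(n:ℤ)) := by
  have hpos : (0:ℤ) < 2*(n:ℤ) := by positivity
  have h0 := Int.emod_nonneg (x-1) (by omega : (2*(n:ℤ)) ≠ 0)
  have h1 := Int.emod_lt_of_pos (x-1) hpos
  simp only [red, Finset.mem_Icc]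
  omega

lemma red_dvd (x : ℤ) : (2*(n:ℤ)) ∣ (x - red n x) := by
  refine ⟨(x-1) / (2*(n:ℤ)), ?_⟩
  have := Int.emod_add_mul_ediv (x-1) (2*(n:ℤ))
  simp only [red]
  linarith

lemma red_eq_self (hn : 1 ≤ n) {x : ℤ} (h1 : 1 ≤ x) (h2 : x ≤ 2*(n:ℤ)) : red n x = x := by
  have : (x - 1) % (2*(n:ℤ)) = x - 1 := Int.emod_eq_of_lt (by omega) (by omega)
  simp only [red, this]; ring

lemma red_congr {x y : ℤ} (h : (2*(n:ℤ)) ∣ (x - y)) : red n x = red n y := by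
  have : (x - 1) % (2*(n:ℤ)) = (y - 1) % (2*(n:ℤ)) := by
    apply Int.ModEq.symm
    rw [Int.modEq_iff_dvd]
    have e : x - 1 - (y - 1) = x - y := by ring
    rw [e]; exact h
  simp only [red, this]

lemma red_unique (hn : 1 ≤ n) {x y : ℤ} (hx : x ∈ Finset.Icc (1:ℤ) (2*(n:ℤ)))
    (hy : y ∈ Finset.Icc (1:ℤ) (2*(n:ℤ))) (h : (2*(n:ℤ)) ∣ (x - y)) : x = y := by
  rw [Finset.mem_Icc] at hx hy
  rw [← red_eq_self hn hx.1 hx.2, ← red_eq_self hn hy.1 hy.2]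
  exact red_congr h


end A0aux


/-- Membership in `A⁰_(2n)`: a bijection of `ℤ` with `g(i+2n) = g(i)+2n` and
`∑_{i=1}^{2n} (g(i)-i) = 0`. -/
def IsA0 (n : ℕ) (g : Equiv.Perm ℤ) : Prop :=
  (∀ i : ℤ, g (i + 2*n) = g i + 2*n) ∧
    (∑ i ∈ Finset.Icc (1 : ℤ) (2*(n:ℤ)), (g i - i)) = 0

/-- The automorphism `R⁰`, `(R⁰g)(a) = -g(-a-1) - 1`. -/
def R0 (g : Equiv.Perm ℤ) : Equiv.Perm ℤ where
  toFun a := -(g (-a - 1)) - 1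
  invFun a := -(g.symm (-a - 1)) - 1
  left_inv := by
    intro a
    show -(g.symm (-(-(g (-a - 1)) - 1) - 1)) - 1 = a
    have h : -(-(g (-a - 1)) - 1) - 1 = g (-a - 1) := by ring
    rw [h, Equiv.symm_apply_apply]
    ring
  right_inv := by
    intro a
    show -(g (-(-(g.symm (-a - 1)) - 1) - 1)) - 1 = a
    have h : -(-(g.symm (-a - 1)) - 1) - 1 = g.symm (-a - 1) := by ring
    rw [h, Equiv.apply_symm_apply]
    ring

/-- The generating set `S_C`: the reflections `s_(2n-1)`, `s_(n-1)` and the products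
`s_i · s_(2n-i-2)` for `0 ≤ i ≤ n-2`. -/
def SC (n : ℕ) : Set (Equiv.Perm ℤ) :=
  {sPerm n (2*(n:ℤ) - 1), sPerm n ((n:ℤ) - 1)} ∪
    {x | ∃ i : ℤ, 0 ≤ i ∧ i ≤ (n:ℤ) - 2 ∧ x = sPerm n i * sPerm n (2*(n:ℤ) - i - 2)}

namespace A0aux

variable {n : ℕ}

/-- reindexing a sum over the standard window along a periodic permutation -/
lemma sum_reindex (hn : 1 ≤ n) {g : Equiv.Perm ℤ}
    (hg : ∀ i : ℤ, g (i + 2*(n:ℤ)) = g i + 2*(n:ℤ)) (F G : ℤ → ℤ)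
    (hFG : ∀ x ∈ Finset.Icc (1:ℤ) (2*(n:ℤ)), F x = G (red n (g x))) :
    ∑ x ∈ Finset.Icc (1:ℤ) (2*(n:ℤ)), F x = ∑ y ∈ Finset.Icc (1:ℤ) (2*(n:ℤ)), G y := by
  have hgs := per_symm hg
  refine Finset.sum_nbij' (fun x => red n (g x)) (fun y => red n (g.symm y))
    (fun a _ => red_mem hn _) (fun a _ => red_mem hn _) ?_ ?_ hFG
  · intro a ha
    have h1 : g.symm (red n (g a)) = g.symm (g a) + (red n (g a) - g a) := by
      apply per_congr hgs
      have e : red n (g a) - g a = -(g a - red n (g a)) := by ring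
      rw [e]; exact dvd_neg.2 (red_dvd _)
    rw [Equiv.symm_apply_apply] at h1
    have h2 : red n (g.symm (red n (g a))) = red n a := by
      apply red_congr
      rw [h1]
      have e : a + (red n (g a) - g a) - a = -(g a - red n (g a)) := by ring
      rw [e]
      exact dvd_neg.2 (red_dvd _)
    show red n (g.symm (red n (g a))) = a
    rw [h2]
    rw [Finset.mem_Icc] at ha
    exact red_eq_self hn ha.1 ha.2
  · intro a ha
    have h1 : g (red n (g.symm a)) = g (g.symm a) + (red n (g.symm a) - g.symm a) := by
      apply per_congr hg
      have e : red n (g.symm a) - g.symm a = -(g.symm a - red n (g.symm a)) := by ring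
      rw [e]; exact dvd_neg.2 (red_dvd _)
    rw [Equiv.apply_symm_apply] at h1
    have h2 : red n (g (red n (g.symm a))) = red n a := by
      apply red_congr
      rw [h1]
      have e : a + (red n (g.symm a) - g.symm a) - a = -(g.symm a - red n (g.symm a)) := by ring
      rw [e]
      exact dvd_neg.2 (red_dvd _)
    show red n (g (red n (g.symm a))) = a
    rw [h2]
    rw [Finset.mem_Icc] at ha
    exact red_eq_self hn ha.1 ha.2

lemma isA0_one : IsA0 n 1 := by
  constructor
  · intro i; simp
  · simp

lemma isA0_mul (hn : 1 ≤ n) {g h : Equiv.Perm ℤ} (hg : IsA0 n g) (hh : IsA0 n h) :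
    IsA0 n (g * h) := by
  obtain ⟨hg1, hg2⟩ := hg
  obtain ⟨hh1, hh2⟩ := hh
  constructor
  · intro i
    show g (h (i + 2*(n:ℤ))) = g (h i) + 2*(n:ℤ)
    rw [hh1, hg1]
  · have key : ∑ x ∈ Finset.Icc (1:ℤ) (2*(n:ℤ)), (g (h x) - h x)
        = ∑ y ∈ Finset.Icc (1:ℤ) (2*(n:ℤ)), (g y - y) := by
      apply sum_reindex hn hh1
      intro x _
      have h1 : g (red n (h x)) = g (h x) + (red n (h x) - h x) := by
        apply per_congr hg1
        have e : red n (h x) - h x = -(h x - red n (h x)) := by ring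
        rw [e]; exact dvd_neg.2 (red_dvd _)
      rw [h1]; ring
    have e : ∀ x : ℤ, g (h x) - x = (g (h x) - h x) + (h x - x) := by intro x; ring
    show (∑ x ∈ Finset.Icc (1:ℤ) (2*(n:ℤ)), (g (h x) - x)) = 0
    calc ∑ x ∈ Finset.Icc (1:ℤ) (2*(n:ℤ)), (g (h x) - x)
        = ∑ x ∈ Finset.Icc (1:ℤ) (2*(n:ℤ)), ((g (h x) - h x) + (h x - x)) := by
          exact Finset.sum_congr rfl (fun x _ => e x)
      _ = (∑ x ∈ Finset.Icc (1:ℤ) (2*(n:ℤ)), (g (h x) - h x))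
          + ∑ x ∈ Finset.Icc (1:ℤ) (2*(n:ℤ)), (h x - x) := Finset.sum_add_distrib
      _ = 0 := by rw [key, hg2, hh2]; ring

lemma isA0_inv (hn : 1 ≤ n) {g : Equiv.Perm ℤ} (hg : IsA0 n g) : IsA0 n g⁻¹ := by
  obtain ⟨hg1, hg2⟩ := hg
  constructor
  · intro i
    exact per_symm hg1 i
  · show (∑ x ∈ Finset.Icc (1:ℤ) (2*(n:ℤ)), (g.symm x - x)) = 0
    have key : ∑ x ∈ Finset.Icc (1:ℤ) (2*(n:ℤ)), (-(g x - x))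
        = ∑ y ∈ Finset.Icc (1:ℤ) (2*(n:ℤ)), (g.symm y - y) := by
      apply sum_reindex hn hg1
      intro x _
      have h1 : g.symm (red n (g x)) = g.symm (g x) + (red n (g x) - g x) := by
        apply per_congr (per_symm hg1)
        have e : red n (g x) - g x = -(g x - red n (g x)) := by ring
        rw [e]; exact dvd_neg.2 (red_dvd _)
      rw [h1, Equiv.symm_apply_apply]; ring
    rw [← key, Finset.sum_neg_distrib, hg2, neg_zero]

end A0aux

namespace A0aux

variable {n : ℕ}

noncomputable def phi (n : ℕ) (g : Equiv.Perm ℤ) : ℤ := ∑ i ∈ Finset.Icc (1:ℤ) (2*(n:ℤ)), (g i - i)^2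

lemma phi_nonneg (g : Equiv.Perm ℤ) : 0 ≤ phi n g :=
  Finset.sum_nonneg (fun i _ => sq_nonneg _)

lemma red_j_ne (hn : 1 ≤ n) (j : ℤ) : red n j ≠ red n (j+1) := by
  intro h
  apply two_n_not_dvd_one n
  have h1 : (2*(n:ℤ)) ∣ (j - red n j) := red_dvd j
  have h2 : (2*(n:ℤ)) ∣ ((j+1) - red n (j+1)) := red_dvd (j+1)
  rw [← h] at h2
  have := dvd_sub h2 h1
  simpa using this

/-- if `x` in the window is distinct from the representatives of `j` and `j+1`,
then `sPerm n j` fixes `x` -/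
lemma sPerm_fix_of_ne (hn : 1 ≤ n) {j x : ℤ} (hx : x ∈ Finset.Icc (1:ℤ) (2*(n:ℤ)))
    (ha : x ≠ red n j) (hb : x ≠ red n (j+1)) : sPerm n j x = x := by
  rw [Finset.mem_Icc] at hx
  apply sPerm_fix
  · intro h
    apply ha
    rw [← red_eq_self hn hx.1 hx.2]
    exact red_congr h
  · intro h
    apply hb
    rw [← red_eq_self hn hx.1 hx.2]
    apply red_congr
    have e : x - (j+1) = x - j - 1 := by ring
    rw [e]; exact h

lemma phi_mul_s (hn : 1 ≤ n) {g : Equiv.Perm ℤ}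
    (hg : ∀ i : ℤ, g (i + 2*(n:ℤ)) = g i + 2*(n:ℤ)) (j : ℤ) :
    phi n (g * sPerm n j) = phi n g + 2 * (g (j+1) - g j) := by
  set a := red n j with hadef
  set b := red n (j+1) with hbdef
  have hamem := red_mem hn j
  have hbmem := red_mem hn (j+1)
  have hab : a ≠ b := red_j_ne hn j
  have hdiff : ∑ x ∈ Finset.Icc (1:ℤ) (2*(n:ℤ)), ((g (sPerm n j x) - x)^2 - (g x - x)^2)
      = ((g (sPerm n j a) - a)^2 - (g a - a)^2) + ((g (sPerm n j b) - b)^2 - (g b - b)^2) := by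
    apply Finset.sum_eq_add_of_mem a b hamem hbmem hab
    intro c hc hcab
    have : sPerm n j c = c := sPerm_fix_of_ne hn hc hcab.1 hcab.2
    rw [this]; ring
  -- evaluate the four terms
  have hsa : sPerm n j a = a + 1 := sPerm_add (by
    have e : a - j = -(j - a) := by ring
    rw [e]; exact dvd_neg.2 (red_dvd j))
  have hsb : sPerm n j b = b - 1 := sPerm_sub (by
    have e : b - j - 1 = -((j+1) - b) := by ring
    rw [e]; exact dvd_neg.2 (red_dvd (j+1)))
  have hga : g a = g j + (a - j) := per_congr hg (by
    have e : a - j = -(j - a) := by ring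
    rw [e]; exact dvd_neg.2 (red_dvd j))
  have hgb : g b = g (j+1) + (b - (j+1)) := per_congr hg (by
    have e : b - (j+1) = -((j+1) - b) := by ring
    rw [e]; exact dvd_neg.2 (red_dvd (j+1)))
  have hga1 : g (a+1) = g (j+1) + ((a+1) - (j+1)) := per_congr hg (by
    have e : (a+1) - (j+1) = -(j - a) := by ring
    rw [e]; exact dvd_neg.2 (red_dvd j))
  have hgb1 : g (b-1) = g j + ((b-1) - j) := per_congr hg (by
    have e : (b-1) - j = -((j+1) - b) := by ring
    rw [e]; exact dvd_neg.2 (red_dvd (j+1)))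
  have hphi : phi n (g * sPerm n j) - phi n g
      = ∑ x ∈ Finset.Icc (1:ℤ) (2*(n:ℤ)), ((g (sPerm n j x) - x)^2 - (g x - x)^2) := by
    unfold phi
    rw [← Finset.sum_sub_distrib]
    rfl
  rw [hdiff, hsa, hsb, hga1, hgb1, hga, hgb] at hphi
  linarith [hphi, sq_nonneg (0:ℤ)]

lemma isA0_s (hn : 1 ≤ n) (j : ℤ) : IsA0 n (sPerm n j) := by
  constructor
  · intro i; exact sPerm_per j i
  · have hamem := red_mem hn j
    have hbmem := red_mem hn (j+1)
    have hab : red n j ≠ red n (j+1) := red_j_ne hn j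
    have key : ∑ x ∈ Finset.Icc (1:ℤ) (2*(n:ℤ)), (sPerm n j x - x)
        = (sPerm n j (red n j) - red n j) + (sPerm n j (red n (j+1)) - red n (j+1)) := by
      apply Finset.sum_eq_add_of_mem _ _ hamem hbmem hab
      intro c hc hcab
      rw [sPerm_fix_of_ne hn hc hcab.1 hcab.2]; ring
    have hsa : sPerm n j (red n j) = red n j + 1 := sPerm_add (by
      have e : red n j - j = -(j - red n j) := by ring
      rw [e]; exact dvd_neg.2 (red_dvd j))
    have hsb : sPerm n j (red n (j+1)) = red n (j+1) - 1 := sPerm_sub (by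
      have e : red n (j+1) - j - 1 = -((j+1) - red n (j+1)) := by ring
      rw [e]; exact dvd_neg.2 (red_dvd (j+1)))
    show ∑ x ∈ Finset.Icc (1:ℤ) (2*(n:ℤ)), (sPerm n j x - x) = 0
    rw [key, hsa, hsb]; ring

lemma R0_mul (g h : Equiv.Perm ℤ) : R0 (g * h) = R0 g * R0 h := by
  ext a
  show -(g (h (-a - 1))) - 1 = R0 g (R0 h a)
  show -(g (h (-a - 1))) - 1 = -(g (-(-(h (-a-1)) - 1) - 1)) - 1
  have e : -(-(h (-a-1)) - 1) - 1 = h (-a-1) := by ring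
  rw [e]

lemma R0_inv (g : Equiv.Perm ℤ) : R0 g⁻¹ = (R0 g)⁻¹ := rfl

lemma R0_one : R0 (1 : Equiv.Perm ℤ) = 1 := by
  ext a
  show -((1 : Equiv.Perm ℤ) (-a - 1)) - 1 = a
  simp

lemma R0_s (j : ℤ) : R0 (sPerm n j) = sPerm n (-2-j) := by
  ext a
  show -(sPerm n j (-a - 1)) - 1 = sPerm n (-2-j) a
  by_cases h1 : (2*(n:ℤ)) ∣ (-a - 1 - j)
  · rw [sPerm_add h1]
    have h2 : (2*(n:ℤ)) ∣ (a - (-2-j) - 1) := by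
      have e : a - (-2-j) - 1 = -(-a - 1 - j) := by ring
      rw [e]; exact dvd_neg.2 h1
    rw [sPerm_sub h2]; ring
  · by_cases h2 : (2*(n:ℤ)) ∣ (-a - 1 - j - 1)
    · rw [sPerm_sub h2]
      have h3 : (2*(n:ℤ)) ∣ (a - (-2-j)) := by
        have e : a - (-2-j) = -(-a - 1 - j - 1) := by ring
        rw [e]; exact dvd_neg.2 h2
      rw [sPerm_add h3]; ring
    · rw [sPerm_fix h1 h2]
      have h3 : ¬ (2*(n:ℤ)) ∣ (a - (-2-j)) := by
        intro h; apply h2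
        have e : -a - 1 - j - 1 = -(a - (-2-j)) := by ring
        rw [e]; exact dvd_neg.2 h
      have h4 : ¬ (2*(n:ℤ)) ∣ (a - (-2-j) - 1) := by
        intro h; apply h1
        have e : -a - 1 - j = -(a - (-2-j) - 1) := by ring
        rw [e]; exact dvd_neg.2 h
      rw [sPerm_fix h3 h4]; ring

lemma ndvd_of_dvd (hn : 1 ≤ n) {e e' C : ℤ} (hx : (2*(n:ℤ)) ∣ e) (hC : e' - e = C)
    (h0 : C ≠ 0) (h1 : -(2*(n:ℤ)) < C) (h2 : C < 2*(n:ℤ)) : ¬ (2*(n:ℤ)) ∣ e' := by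
  intro h
  have hd := dvd_sub h hx
  rw [hC] at hd
  exact ndvd hn h0 h1 h2 hd

lemma s_comm (hn : 2 ≤ n) {i : ℤ} (h0 : 0 ≤ i) (h1 : i ≤ (n:ℤ) - 2) :
    sPerm n i * sPerm n (2*(n:ℤ) - i - 2) = sPerm n (2*(n:ℤ) - i - 2) * sPerm n i := by
  have hn1 : 1 ≤ n := by omega
  have hni : (2:ℤ) ≤ (n:ℤ) := by exact_mod_cast hn
  set k : ℤ := 2*(n:ℤ) - i - 2 with hk
  ext x
  rw [Equiv.Perm.mul_apply, Equiv.Perm.mul_apply]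
  by_cases hxi : (2*(n:ℤ)) ∣ (x - i)
  · have hki : sPerm n k x = x := sPerm_fix
      (ndvd_of_dvd hn1 hxi (by rw [hk]; ring : (x - k) - (x - i) = 2*i + 2 - 2*(n:ℤ))
        (by omega) (by omega) (by omega))
      (ndvd_of_dvd hn1 hxi (by rw [hk]; ring : (x - k - 1) - (x - i) = 2*i + 1 - 2*(n:ℤ))
        (by omega) (by omega) (by omega))
    rw [hki, sPerm_add hxi]
    have hk1 : sPerm n k (x+1) = x+1 := sPerm_fix
      (ndvd_of_dvd hn1 hxi (by rw [hk]; ring : (x+1 - k) - (x - i) = 2*i + 3 - 2*(n:ℤ))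
        (by omega) (by omega) (by omega))
      (ndvd_of_dvd hn1 hxi (by rw [hk]; ring : (x+1 - k - 1) - (x - i) = 2*i + 2 - 2*(n:ℤ))
        (by omega) (by omega) (by omega))
    rw [hk1]
  · by_cases hxi1 : (2*(n:ℤ)) ∣ (x - i - 1)
    · have hki : sPerm n k x = x := sPerm_fix
        (ndvd_of_dvd hn1 hxi1 (by rw [hk]; ring : (x - k) - (x - i - 1) = 2*i + 3 - 2*(n:ℤ))
          (by omega) (by omega) (by omega))
        (ndvd_of_dvd hn1 hxi1 (by rw [hk]; ring : (x - k - 1) - (x - i - 1) = 2*i + 2 - 2*(n:ℤ))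
          (by omega) (by omega) (by omega))
      rw [hki, sPerm_sub hxi1]
      have hk1 : sPerm n k (x-1) = x-1 := sPerm_fix
        (ndvd_of_dvd hn1 hxi1 (by rw [hk]; ring : (x-1 - k) - (x - i - 1) = 2*i + 2 - 2*(n:ℤ))
          (by omega) (by omega) (by omega))
        (ndvd_of_dvd hn1 hxi1 (by rw [hk]; ring : (x-1 - k - 1) - (x - i - 1) = 2*i + 1 - 2*(n:ℤ))
          (by omega) (by omega) (by omega))
      rw [hk1]
    · by_cases hxk : (2*(n:ℤ)) ∣ (x - k)
      · have hsi : sPerm n i x = x := sPerm_fix hxi hxi1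
        rw [hsi, sPerm_add hxk]
        have hi1 : sPerm n i (x+1) = x+1 := sPerm_fix
          (ndvd_of_dvd hn1 hxk (by rw [hk]; ring : (x+1 - i) - (x - k) = 2*(n:ℤ) - 2*i - 1)
            (by omega) (by omega) (by omega))
          (ndvd_of_dvd hn1 hxk (by rw [hk]; ring : (x+1 - i - 1) - (x - k) = 2*(n:ℤ) - 2*i - 2)
            (by omega) (by omega) (by omega))
        rw [hi1]
      · by_cases hxk1 : (2*(n:ℤ)) ∣ (x - k - 1)
        · have hsi : sPerm n i x = x := sPerm_fix hxi hxi1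
          rw [hsi, sPerm_sub hxk1]
          have hi1 : sPerm n i (x-1) = x-1 := sPerm_fix
            (ndvd_of_dvd hn1 hxk1 (by rw [hk]; ring : (x-1 - i) - (x - k - 1) = 2*(n:ℤ) - 2*i - 2)
              (by omega) (by omega) (by omega))
            (ndvd_of_dvd hn1 hxk1 (by rw [hk]; ring : (x-1 - i - 1) - (x - k - 1) = 2*(n:ℤ) - 2*i - 3)
              (by omega) (by omega) (by omega))
          rw [hi1]
        · rw [sPerm_fix hxi hxi1, sPerm_fix hxk hxk1, sPerm_fix hxi hxi1]

lemma SC_mem (hn : 2 ≤ n) {x : Equiv.Perm ℤ} (hx : x ∈ SC n) : IsA0 n x ∧ R0 x = x := by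
  have hn1 : 1 ≤ n := by omega
  rcases hx with (hx1 | hx2) | ⟨i, hi0, hi1, rfl⟩
  · subst hx1
    refine ⟨isA0_s hn1 _, ?_⟩
    rw [R0_s]
    exact sPerm_congr ⟨-2, by ring⟩
  · subst hx2
    refine ⟨isA0_s hn1 _, ?_⟩
    rw [R0_s]
    exact sPerm_congr ⟨-1, by ring⟩
  · refine ⟨isA0_mul hn1 (isA0_s hn1 _) (isA0_s hn1 _), ?_⟩
    rw [R0_mul, R0_s, R0_s]
    have e1 : sPerm n (-2-i) = sPerm n (2*(n:ℤ) - i - 2) := sPerm_congr ⟨-1, by ring⟩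
    have e2 : sPerm n (-2-(2*(n:ℤ)-i-2)) = sPerm n i := sPerm_congr ⟨-1, by ring⟩
    rw [e1, e2]
    exact (s_comm hn hi0 hi1).symm

def Hsub (n : ℕ) (hn : 1 ≤ n) : Subgroup (Equiv.Perm ℤ) where
  carrier := {g | IsA0 n g ∧ R0 g = g}
  one_mem' := ⟨isA0_one, R0_one⟩
  mul_mem' := fun ha hb => ⟨isA0_mul hn ha.1 hb.1, by rw [R0_mul, ha.2, hb.2]⟩
  inv_mem' := fun ha => ⟨isA0_inv hn ha.1, by rw [R0_inv, ha.2]⟩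

lemma eq_one_of_mono (hn : 1 ≤ n) {g : Equiv.Perm ℤ} (hA : IsA0 n g)
    (hd : ∀ j : ℤ, g j < g (j+1)) : g = 1 := by
  have hstep : ∀ i : ℤ, g (i+1) = g i + 1 := by
    intro i
    have htel : ∑ k ∈ Finset.range (2*n), (g (i + (k:ℤ) + 1) - g (i + (k:ℤ))) = 2*(n:ℤ) := by
      have h := Finset.sum_range_sub (fun k : ℕ => g (i + (k:ℤ))) (2*n)
      have e : ∀ k : ℕ, g (i + ((k+1 : ℕ):ℤ)) - g (i + (k:ℤ)) = g (i + (k:ℤ) + 1) - g (i + (k:ℤ)) := by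
        intro k; push_cast; ring_nf
      calc ∑ k ∈ Finset.range (2*n), (g (i + (k:ℤ) + 1) - g (i + (k:ℤ)))
          = ∑ k ∈ Finset.range (2*n), (g (i + ((k+1:ℕ):ℤ)) - g (i + (k:ℤ))) :=
            Finset.sum_congr rfl (fun k _ => (e k).symm)
        _ = g (i + ((2*n : ℕ):ℤ)) - g (i + ((0:ℕ):ℤ)) := h
        _ = 2*(n:ℤ) := by
            push_cast
            rw [hA.1 i]
            ring
    have hzero : ∑ k ∈ Finset.range (2*n), ((g (i + (k:ℤ) + 1) - g (i + (k:ℤ))) - 1) = 0 := by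
      rw [Finset.sum_sub_distrib, htel, Finset.sum_const, Finset.card_range]
      simp
    have hpos : ∀ k ∈ Finset.range (2*n), 0 ≤ (g (i + (k:ℤ) + 1) - g (i + (k:ℤ))) - 1 := by
      intro k _
      have := hd (i + (k:ℤ))
      omega
    have hall := (Finset.sum_eq_zero_iff_of_nonneg hpos).mp hzero
    have h0 := hall 0 (Finset.mem_range.mpr (by omega))
    simp only [Nat.cast_zero, add_zero] at h0
    omega
  have hlin : ∀ i : ℤ, g i = g 0 + i := by
    intro i
    induction i using Int.induction_on with
    | zero => simp
    | succ k ih => rw [hstep (k:ℤ), ih]; ring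
    | pred k ih =>
      have := hstep (-(k:ℤ)-1)
      have e : -(k:ℤ) - 1 + 1 = -(k:ℤ) := by ring
      rw [e] at this
      omega
  have hzero : g 0 = 0 := by
    have h2 := hA.2
    have e : ∀ x ∈ Finset.Icc (1:ℤ) (2*(n:ℤ)), g x - x = g 0 := by
      intro x _; rw [hlin x]; ring
    rw [Finset.sum_congr rfl e, Finset.sum_const, Int.card_Icc] at h2
    have hc : (2*(n:ℤ) + 1 - 1).toNat = 2*n := by omega
    rw [hc, nsmul_eq_mul] at h2
    have : (2*n : ℕ) ≠ 0 := by omega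
    have := mul_eq_zero.mp h2
    rcases this with h | h
    · exfalso
      have : ((2*n : ℕ) : ℤ) ≠ 0 := by exact_mod_cast ‹(2*n : ℕ) ≠ 0›
      exact this h
    · exact h
  ext x
  show g x = x
  rw [hlin x, hzero]; ring

lemma per_mul_s {g : Equiv.Perm ℤ} (hg : ∀ i : ℤ, g (i + 2*(n:ℤ)) = g i + 2*(n:ℤ)) (j : ℤ) :
    ∀ i : ℤ, (g * sPerm n j) (i + 2*(n:ℤ)) = (g * sPerm n j) i + 2*(n:ℤ) := by
  intro i
  show g (sPerm n j (i + 2*(n:ℤ))) = g (sPerm n j i) + 2*(n:ℤ)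
  rw [sPerm_per, hg]

lemma descent_mirror {g : Equiv.Perm ℤ}
    (hg : ∀ i : ℤ, g (i + 2*(n:ℤ)) = g i + 2*(n:ℤ))
    (hsym : ∀ a : ℤ, g (-a-1) = -(g a) - 1) {a : ℤ} (h : g (a+1) < g a) :
    g ((2*(n:ℤ) - a - 2) + 1) < g (2*(n:ℤ) - a - 2) := by
  have h1 : g (2*(n:ℤ) - a - 2) = g (-a-2) + 2*(n:ℤ) := by
    have := per_congr hg (x := 2*(n:ℤ) - a - 2) (y := -a-2) ⟨1, by ring⟩
    rw [this]; ring
  have h2 : g ((2*(n:ℤ) - a - 2) + 1) = g (-a-1) + 2*(n:ℤ) := by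
    have := per_congr hg (x := (2*(n:ℤ) - a - 2) + 1) (y := -a-1) ⟨1, by ring⟩
    rw [this]; ring
  have h3 : g (-a-2) = -(g (a+1)) - 1 := by
    have := hsym (a+1)
    have e : -(a+1) - 1 = -a-2 := by ring
    rw [e] at this
    exact this
  have h4 : g (-a-1) = -(g a) - 1 := hsym a
  rw [h1, h2, h3, h4]
  linarith

lemma mem_closure (hn : 2 ≤ n) : ∀ N : ℕ, ∀ g : Equiv.Perm ℤ, IsA0 n g → R0 g = g →
    (phi n g).toNat = N → g ∈ Subgroup.closure (SC n) := by
  have hn1 : 1 ≤ n := by omega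
  have hni : (2:ℤ) ≤ (n:ℤ) := by exact_mod_cast hn
  intro N
  induction N using Nat.strong_induction_on with
  | _ N ih =>
  intro g hA hR hN
  by_cases hmono : ∀ j : ℤ, g j < g (j+1)
  · rw [eq_one_of_mono hn1 hA hmono]; exact one_mem _
  push_neg at hmono
  obtain ⟨j, hj⟩ := hmono
  have hdesc : g (j+1) < g j := by
    rcases lt_or_eq_of_le hj with h | h
    · exact h
    · exfalso; have := g.injective h; omega
  have hsym : ∀ a : ℤ, g (-a-1) = -(g a) - 1 := by
    intro a
    have h : (R0 g) a = g a := by rw [hR]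
    have h2 : -(g (-a-1)) - 1 = g a := h
    linarith
  -- the generic wrap-up step
  have wrap : ∀ t : Equiv.Perm ℤ, t ∈ SC n → phi n (g * t) < phi n g →
      g ∈ Subgroup.closure (SC n) := by
    intro t htSC hlt
    have htH := SC_mem hn htSC
    have hA' : IsA0 n (g * t) := isA0_mul hn1 hA htH.1
    have hR' : R0 (g * t) = g * t := by rw [R0_mul, hR, htH.2]
    have h0 : (phi n (g*t)).toNat < N := by
      have h1 := phi_nonneg (n := n) (g * t)
      have h2 := phi_nonneg (n := n) g
      omega
    have hmem := ih _ h0 (g*t) hA' hR' rfl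
    have he : g = (g * t) * t⁻¹ := by group
    rw [he]
    exact mul_mem hmem (inv_mem (Subgroup.subset_closure htSC))
  -- reduce the descent to the standard window
  set jm : ℤ := j % (2*(n:ℤ)) with hjm
  have hjm0 : 0 ≤ jm := Int.emod_nonneg j (by omega)
  have hjm2 : jm < 2*(n:ℤ) := Int.emod_lt_of_pos j (by omega)
  have hdvd : (2*(n:ℤ)) ∣ (j - jm) := ⟨j / (2*(n:ℤ)), by
    have := Int.emod_add_mul_ediv j (2*(n:ℤ)); linarith⟩
  have hdesc' : g (jm + 1) < g jm := by
    have e1 : g j = g jm + (j - jm) := per_congr hA.1 hdvd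
    have e2 : g (j+1) = g (jm+1) + ((j+1) - (jm+1)) := per_congr hA.1 (by
      have e : (j+1) - (jm+1) = j - jm := by ring
      rw [e]; exact hdvd)
    linarith
  by_cases hc1 : jm = (n:ℤ) - 1
  · apply wrap (sPerm n ((n:ℤ)-1))
    · exact Or.inl (Or.inr rfl)
    · rw [phi_mul_s hn1 hA.1]
      rw [hc1] at hdesc'
      linarith
  by_cases hc2 : jm = 2*(n:ℤ) - 1
  · apply wrap (sPerm n (2*(n:ℤ)-1))
    · exact Or.inl (Or.inl rfl)
    · rw [phi_mul_s hn1 hA.1]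
      rw [hc2] at hdesc'
      linarith
  -- the paired case
  obtain ⟨i, hi0, hi1, hdi, hdk⟩ : ∃ i : ℤ, 0 ≤ i ∧ i ≤ (n:ℤ) - 2 ∧ g (i+1) < g i ∧
      g ((2*(n:ℤ) - i - 2) + 1) < g (2*(n:ℤ) - i - 2) := by
    by_cases hsmall : jm ≤ (n:ℤ) - 2
    · exact ⟨jm, hjm0, hsmall, hdesc', descent_mirror hA.1 hsym hdesc'⟩
    · refine ⟨2*(n:ℤ) - jm - 2, by omega, by omega, ?_, ?_⟩
      · exact descent_mirror hA.1 hsym hdesc'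
      · have e : 2*(n:ℤ) - (2*(n:ℤ) - jm - 2) - 2 = jm := by ring
        rw [e]
        exact hdesc'
  apply wrap (sPerm n i * sPerm n (2*(n:ℤ) - i - 2))
  · exact Or.inr ⟨i, hi0, hi1, rfl⟩
  · set k : ℤ := 2*(n:ℤ) - i - 2 with hk
    have hassoc : g * (sPerm n i * sPerm n k) = (g * sPerm n i) * sPerm n k :=
      (mul_assoc _ _ _).symm
    rw [hassoc]
    have hp1 : phi n (g * sPerm n i) = phi n g + 2*(g (i+1) - g i) := phi_mul_s hn1 hA.1 i
    have hp2 : phi n ((g * sPerm n i) * sPerm n k)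
        = phi n (g * sPerm n i) + 2*((g * sPerm n i) (k+1) - (g * sPerm n i) k) :=
      phi_mul_s hn1 (per_mul_s hA.1 i) k
    have hfix1 : (g * sPerm n i) k = g k := by
      show g (sPerm n i k) = g k
      rw [sPerm_fix (ndvd hn1 (by omega) (by omega) (by omega))
        (ndvd hn1 (by omega) (by omega) (by omega))]
    have hfix2 : (g * sPerm n i) (k+1) = g (k+1) := by
      show g (sPerm n i (k+1)) = g (k+1)
      rw [sPerm_fix (ndvd hn1 (by omega) (by omega) (by omega))
        (ndvd hn1 (by omega) (by omega) (by omega))]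
    rw [hp2, hp1, hfix1, hfix2]
    linarith

end A0aux


theorem stmt_14 (n : ℕ) (hn : 2 ≤ n) :
    (∀ x ∈ SC n, R0 x = x) ∧
    {g : Equiv.Perm ℤ | IsA0 n g ∧ R0 g = g}
      = (Subgroup.closure (SC n) : Set (Equiv.Perm ℤ)) := by
  have hn1 : 1 ≤ n := by omega
  constructor
  · intro x hx; exact (A0aux.SC_mem hn hx).2
  · ext g
    simp only [Set.mem_setOf_eq, SetLike.mem_coe]
    constructor
    · rintro ⟨hA, hR⟩
      exact A0aux.mem_closure hn _ g hA hR rfl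
    · intro hg
      have hle : Subgroup.closure (SC n) ≤ A0aux.Hsub n hn1 :=
        (Subgroup.closure_le _).mpr (fun x hx => A0aux.SC_mem hn hx)
      exact hle hg
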